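/- For an even number of weighings 2k with k ≥ 1, the number of outcome strings of length 2k over {<,>,=} with exactly k unbalanced symbols, starting and ending with an unbalanced symbol, and with no two consecutive unbalanced symbols, equals (k-1)·2^k; the number of such strings with exactly k-1 unbalanced symbols, starting and ending with =, and no two consecutive unbalanced symbols, equals k·2^{k-1}; and their difference is (k-2)·2^{k-1}. -/

import Mathlib

namespace CountEvenAux

lemma nonadj_card_le (V : Finset ℕ) (lo hi : ℕ)
    (hmem : ∀ v ∈ V, lo ≤ v ∧ v ≤ hi)
    (hadj : ∀ v ∈ V, v + 1 ∉ V) : V.card ≤ (hi - lo) / 2 + 1 := by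
  classical
  have h := Finset.card_le_card_of_injOn (f := fun v => (v - lo) / 2)
    (t := Finset.range ((hi - lo) / 2 + 1))
    (fun v hv => by
      simp only [Finset.mem_coe, Finset.mem_range]
      have := hmem v hv
      omega)
    (fun u hu v hv huv => by
      simp only at huv
      have h1 := hmem u hu
      have h2 := hmem v hv
      by_contra hne
      rcases (by omega : v = u + 1 ∨ u = v + 1) with h | h
      · exact hadj u hu (h ▸ hv)
      · exact hadj v hv (h ▸ hu))
  simpa using h

lemma filter_split (U : Finset ℕ) (p q r : ℕ → Prop)
    [DecidablePred p] [DecidablePred q] [DecidablePred r]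
    (h : ∀ u ∈ U, p u ↔ (q u ∨ r u)) (hd : ∀ u, ¬(q u ∧ r u)) :
    (U.filter p).card = (U.filter q).card + (U.filter r).card := by
  classical
  have : U.filter p = U.filter q ∪ U.filter r := by
    ext u
    simp only [Finset.mem_filter, Finset.mem_union]
    constructor
    · rintro ⟨hu, hp⟩
      rcases (h u hu).1 hp with h' | h'
      · exact Or.inl ⟨hu, h'⟩
      · exact Or.inr ⟨hu, h'⟩
    · rintro (⟨hu, h'⟩ | ⟨hu, h'⟩) <;> exact ⟨hu, (h u hu).2 (by tauto)⟩
  rw [this, Finset.card_union_of_disjoint]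
  rw [Finset.disjoint_left]
  intro u hu hu'
  simp only [Finset.mem_filter] at hu hu'
  exact hd u ⟨hu.2, hu'.2⟩

def pos' (a E t : ℕ) : ℕ := a + 2 * t + (if E ≤ t then 1 else 0)

/-- rank of u in U -/
def rnk (U : Finset ℕ) (u : ℕ) : ℕ := (U.filter (· < u)).card

lemma struct (a m : ℕ) (U : Finset ℕ)
    (hsub : ∀ u ∈ U, a ≤ u ∧ u ≤ a + 2 * m - 1)
    (hcard : U.card = m)
    (hadj : ∀ u ∈ U, u + 1 ∉ U) :
    ∃ E ≤ m, ∀ u, u ∈ U ↔ ∃ t < m, u = pos' a E t := by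
  classical
  unfold pos'
  rcases Nat.eq_zero_or_pos m with hm | hm
  · subst hm
    refine ⟨0, Nat.le_refl _, fun u => ?_⟩
    rw [Finset.card_eq_zero] at hcard
    simp [hcard]
  have hcle : ∀ u ∈ U, (U.filter (· ≤ u)).card = rnk U u + 1 := by
    intro u hu
    have hins : (U.filter (· ≤ u)) = insert u (U.filter (· < u)) := by
      ext v
      simp only [Finset.mem_filter, Finset.mem_insert]
      constructor
      · rintro ⟨hvU, hvu⟩
        rcases eq_or_lt_of_le hvu with h | h
        · exact Or.inl h
        · exact Or.inr ⟨hvU, h⟩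
      · rintro (rfl | ⟨hvU, hvu⟩)
        · exact ⟨hu, le_refl _⟩
        · exact ⟨hvU, le_of_lt hvu⟩
    rw [hins, Finset.card_insert_of_notMem (by simp)]
    rfl
  -- step (b): each u ∈ U equals a + 2 * rnk u or a + 2 * rnk u + 1
  have hb : ∀ u ∈ U, u = a + 2 * rnk U u ∨ u = a + 2 * rnk U u + 1 := by
    intro u hu
    have hle : (U.filter (· ≤ u)).card ≤ (u - a) / 2 + 1 :=
      nonadj_card_le _ a u
        (fun v hv => by
          simp only [Finset.mem_filter] at hv
          exact ⟨(hsub v hv.1).1, hv.2⟩)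
        (fun v hv hv1 => by
          simp only [Finset.mem_filter] at hv hv1
          exact hadj v hv.1 hv1.1)
    have hge : (U.filter (u ≤ ·)).card ≤ (a + 2 * m - 1 - u) / 2 + 1 :=
      nonadj_card_le _ u (a + 2 * m - 1)
        (fun v hv => by
          simp only [Finset.mem_filter] at hv
          exact ⟨hv.2, (hsub v hv.1).2⟩)
        (fun v hv hv1 => by
          simp only [Finset.mem_filter] at hv hv1
          exact hadj v hv.1 hv1.1)
    have hsplit : U.card = (U.filter (· < u)).card + (U.filter (u ≤ ·)).card := by
      have h0 := filter_split U (fun _ => True) (· < u) (u ≤ ·)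
        (fun v _ => ⟨fun _ => by omega, fun _ => trivial⟩) (fun v => by omega)
      rwa [Finset.filter_true] at h0
    have hau := hsub u hu
    have hc1 := hcle u hu
    unfold rnk at *
    omega
  -- rank is strictly monotone
  have hrmono : ∀ u ∈ U, ∀ v ∈ U, u < v → rnk U u + 1 ≤ rnk U v := by
    intro u hu v hv huv
    have hss : insert u (U.filter (· < u)) ⊆ U.filter (· < v) := by
      intro w hw
      simp only [Finset.mem_insert, Finset.mem_filter] at hw ⊢
      rcases hw with rfl | ⟨hwU, hwu⟩
      · exact ⟨hu, huv⟩
      · exact ⟨hwU, lt_trans hwu huv⟩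
    have h2 := Finset.card_le_card hss
    rw [Finset.card_insert_of_notMem (by simp)] at h2
    exact h2
  -- step (c): parity is monotone
  have hc : ∀ u ∈ U, ∀ v ∈ U, u < v → u = a + 2 * rnk U u + 1 →
      v = a + 2 * rnk U v + 1 := by
    intro u hu v hv huv hodd
    have hvge : u + 2 ≤ v := by
      rcases (by omega : v = u + 1 ∨ u + 2 ≤ v) with h | h
      · exact absurd (h ▸ hv) (hadj u hu)
      · exact h
    have hcnt : (U.filter (fun w => u < w ∧ w ≤ v)).card ≤ (v - (u + 2)) / 2 + 1 :=
      nonadj_card_le _ (u + 2) v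
        (fun w hw => by
          simp only [Finset.mem_filter] at hw
          refine ⟨?_, hw.2.2⟩
          rcases (by omega : w = u + 1 ∨ u + 2 ≤ w) with h | h
          · exact absurd (h ▸ hw.1) (hadj u hu)
          · exact h)
        (fun w hw hw1 => by
          simp only [Finset.mem_filter] at hw hw1
          exact hadj w hw.1 hw1.1)
    have hsplit2 : (U.filter (· ≤ v)).card =
        (U.filter (· ≤ u)).card + (U.filter (fun w => u < w ∧ w ≤ v)).card :=
      filter_split U _ _ _ (fun w _ => by constructor <;> intro <;> omega)
        (fun w => by omega)
    have h1 := hcle u hu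
    have h2 := hcle v hv
    have h3 := hb v hv
    have h4 := hrmono u hu v hv huv
    omega
  -- the set of "even" elements
  set Z := U.filter (fun u => u = a + 2 * rnk U u) with hZ
  set E := Z.card with hE
  have hd1 : ∀ u ∈ U, u = a + 2 * rnk U u → rnk U u < E := by
    intro u hu heq
    have hss : insert u (U.filter (· < u)) ⊆ Z := by
      intro w hw
      simp only [Finset.mem_insert, Finset.mem_filter] at hw
      rcases hw with rfl | ⟨hwU, hwu⟩
      · simp only [hZ, Finset.mem_filter]
        exact ⟨hu, heq⟩
      · simp only [hZ, Finset.mem_filter]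
        refine ⟨hwU, ?_⟩
        rcases hb w hwU with h | h
        · exact h
        · exact absurd (hc w hwU u hu hwu h) (by omega)
    have h2 := Finset.card_le_card hss
    rw [Finset.card_insert_of_notMem (by simp)] at h2
    exact h2
  have hd2 : ∀ u ∈ U, u = a + 2 * rnk U u + 1 → E ≤ rnk U u := by
    intro u hu heq
    have hss : Z ⊆ U.filter (· < u) := by
      intro z hz
      simp only [hZ, Finset.mem_filter] at hz
      obtain ⟨hzU, hzeq⟩ := hz
      simp only [Finset.mem_filter]
      refine ⟨hzU, ?_⟩
      rcases lt_trichotomy z u with h | h | h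
      · exact h
      · exact absurd (h ▸ hzeq) (by omega)
      · exact absurd (hc u hu z hzU h heq) (by omega)
    exact Finset.card_le_card hss
  have hEm : E ≤ m := by
    rw [← hcard]
    exact Finset.card_le_card (Finset.filter_subset _ _)
  have hrm : ∀ u ∈ U, rnk U u < m := by
    intro u hu
    have h1 := hcle u hu
    have h2 : (U.filter (· ≤ u)).card ≤ m := by
      rw [← hcard]
      exact Finset.card_le_card (Finset.filter_subset _ _)
    omega
  have hfwd : ∀ u ∈ U, ∃ t < m, u = a + 2 * t + (if E ≤ t then 1 else 0) := by
    intro u hu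
    refine ⟨rnk U u, hrm u hu, ?_⟩
    rcases hb u hu with h | h
    · rw [if_neg (by have := hd1 u hu h; omega)]
      omega
    · rw [if_pos (hd2 u hu h)]
      exact h
  refine ⟨E, hEm, fun u => ⟨hfwd u, ?_⟩⟩
  intro hu
  have hUF : U ⊆ (Finset.range m).image (fun t => a + 2 * t + (if E ≤ t then 1 else 0)) := by
    intro w hw
    obtain ⟨t, ht, heq⟩ := hfwd w hw
    simp only [Finset.mem_image, Finset.mem_range]
    exact ⟨t, ht, heq.symm⟩
  have hcardF : ((Finset.range m).image
      (fun t => a + 2 * t + (if E ≤ t then 1 else 0))).card ≤ U.card := by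
    rw [hcard]
    exact le_trans Finset.card_image_le (by simp)
  have := Finset.eq_of_subset_of_card_le hUF hcardF
  rw [this]
  obtain ⟨t, ht, heq⟩ := hu
  simp only [Finset.mem_image, Finset.mem_range]
  exact ⟨t, ht, heq.symm⟩

def pat (k a E : ℕ) (σ : ℕ → Fin 2) : Fin (2 * k) → Fin 3 :=
  fun i => if (i : ℕ) = pos' a E (((i : ℕ) - a) / 2)
    then Fin.castLE (by norm_num) (σ (((i : ℕ) - a) / 2)) else 2

lemma castLE_ne_two (x : Fin 2) : Fin.castLE (by norm_num) x ≠ (2 : Fin 3) := by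
  have := x.isLt
  apply Fin.ne_of_val_ne
  simp [Fin.castLE]
  omega

section CL
variable {k a m E : ℕ} (σ : ℕ → Fin 2)
variable (h1 : a + 2 * m ≤ 2 * k) (h2 : 2 * k ≤ a + 2 * m + 1) (hEm : E ≤ m)

include h1 h2 hEm in
lemma pat_ne_iff (i : Fin (2 * k)) :
    pat k a E σ i ≠ 2 ↔ ∃ t < m, (i : ℕ) = pos' a E t := by
  have hi := i.isLt
  unfold pat
  split_ifs with h
  · refine iff_of_true (castLE_ne_two _) ⟨((i : ℕ) - a) / 2, ?_, h⟩
    by_cases hE : E ≤ ((i : ℕ) - a) / 2 <;> simp [pos', hE] at h ⊢ <;> omega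
  · refine iff_of_false (by simp) ?_
    rintro ⟨t, htm, hteq⟩
    apply h
    have ht0 : ((i : ℕ) - a) / 2 = t := by
      by_cases hE : E ≤ t <;> simp [pos', hE] at hteq <;> omega
    rw [ht0]
    exact hteq

include h1 h2 hEm in
lemma pat_adj (i : Fin (2 * k)) (h : (i : ℕ) + 1 < 2 * k)
    (hne : pat k a E σ i ≠ 2) : pat k a E σ ⟨(i : ℕ) + 1, h⟩ = 2 := by
  by_contra hc
  obtain ⟨t, htm, hteq⟩ := (pat_ne_iff σ h1 h2 hEm i).1 hne
  obtain ⟨t', htm', hteq'⟩ := (pat_ne_iff σ h1 h2 hEm ⟨(i : ℕ) + 1, h⟩).1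
    (by simpa using hc)
  simp only [Fin.val_mk] at hteq'
  by_cases hE : E ≤ t <;> by_cases hE' : E ≤ t' <;>
    simp [pos', hE, hE'] at hteq hteq' <;> omega

include h1 h2 hEm in
lemma pat_card :
    (Finset.univ.filter fun i => pat k a E σ i ≠ 2).card = m := by
  classical
  have hlt : ∀ t < m, pos' a E t < 2 * k := by
    intro t ht
    by_cases hE : E ≤ t <;> simp [pos', hE] <;> omega
  have himg : (Finset.univ.filter fun i => pat k a E σ i ≠ 2).image Fin.val
      = (Finset.range m).image (pos' a E) := by
    ext u
    simp only [Finset.mem_image, Finset.mem_filter, Finset.mem_range, Finset.mem_univ,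
      true_and]
    constructor
    · rintro ⟨i, hne, rfl⟩
      obtain ⟨t, htm, hteq⟩ := (pat_ne_iff σ h1 h2 hEm i).1 hne
      exact ⟨t, htm, hteq.symm⟩
    · rintro ⟨t, htm, rfl⟩
      refine ⟨⟨pos' a E t, hlt t htm⟩, ?_, rfl⟩
      rw [pat_ne_iff σ h1 h2 hEm]
      exact ⟨t, htm, rfl⟩
  have hc1 := Finset.card_image_of_injective
    (Finset.univ.filter fun i => pat k a E σ i ≠ 2) Fin.val_injective
  rw [himg] at hc1
  rw [← hc1]
  rw [Finset.card_image_of_injOn]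
  · simp
  · intro t ht t' ht' heq
    by_cases hE : E ≤ t <;> by_cases hE' : E ≤ t' <;>
      simp [pos', hE, hE'] at heq <;> omega

include h1 h2 in
lemma pat_inj_E {E' : ℕ} {σ' : ℕ → Fin 2} (hEm : E ≤ m) (hEm' : E' ≤ m)
    (heq : pat k a E σ = pat k a E' σ') : E = E' := by
  have aux : ∀ (F F' : ℕ) (τ τ' : ℕ → Fin 2), F ≤ m → F' ≤ m → F < F' →
      pat k a F τ = pat k a F' τ' → False := by
    intro F F' τ τ' hF hF' hlt hpq
    have hik : a + 2 * F + 1 < 2 * k := by omega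
    set i : Fin (2 * k) := ⟨a + 2 * F + 1, hik⟩ with hi
    have hne : pat k a F τ i ≠ 2 := by
      rw [pat_ne_iff τ h1 h2 hF i]
      refine ⟨F, by omega, ?_⟩
      simp [pos', hi]
    have hne2 : pat k a F' τ' i ≠ 2 := by rwa [hpq] at hne
    rw [pat_ne_iff τ' h1 h2 hF' i] at hne2
    obtain ⟨t, htm, hteq⟩ := hne2
    by_cases hE' : F' ≤ t <;> simp [pos', hE', hi] at hteq <;> omega
  rcases lt_trichotomy E E' with h | h | h
  · exact absurd (aux E E' σ σ' hEm hEm' h heq) (by simp)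
  · exact h
  · exact absurd (aux E' E σ' σ hEm' hEm h heq.symm) (by simp)

include h1 h2 hEm in
lemma pat_inj_sigma {σ' : ℕ → Fin 2}
    (heq : pat k a E σ = pat k a E σ') : ∀ t < m, σ t = σ' t := by
  intro t ht
  have hik : pos' a E t < 2 * k := by
    by_cases hE : E ≤ t <;> simp [pos', hE] <;> omega
  set i : Fin (2 * k) := ⟨pos' a E t, hik⟩ with hi
  have ht0 : (((i : ℕ)) - a) / 2 = t := by
    by_cases hE : E ≤ t <;> simp [pos', hE, hi] <;> omega
  have hcond : (i : ℕ) = pos' a E (((i : ℕ) - a) / 2) := by rw [ht0]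
  have := congrFun heq i
  unfold pat at this
  rw [if_pos hcond, if_pos hcond, ht0] at this
  exact Fin.castLE_injective (by norm_num) this

include h1 h2 hEm in
lemma coverage (s : Fin (2 * k) → Fin 3)
    (hch : ∀ u : ℕ, (∃ hu : u < 2 * k, s ⟨u, hu⟩ ≠ 2) ↔ ∃ t < m, u = pos' a E t) :
    ∃ σ : Fin m → Fin 2,
      s = pat k a E (fun n => if h : n < m then σ ⟨n, h⟩ else 0) := by
  have hposlt : ∀ t, t < m → pos' a E t < 2 * k := by
    intro t ht
    by_cases hE : E ≤ t <;> simp [pos', hE] <;> omega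
  refine ⟨fun t => if s ⟨pos' a E t.1, hposlt _ t.2⟩ = 0 then 0 else 1, ?_⟩
  funext i
  unfold pat
  split_ifs with hcond
  · -- s i is unbalanced
    have htm : ((i : ℕ) - a) / 2 < m := by
      have hi := i.isLt
      have hcond' := hcond
      by_cases hE : E ≤ ((i : ℕ) - a) / 2 <;> simp [pos', hE] at hcond' <;> omega
    simp only [dif_pos htm]
    have hieq : (⟨pos' a E (((i : ℕ) - a) / 2), hposlt _ htm⟩ : Fin (2 * k)) = i :=
      Fin.ext hcond.symm
    rw [hieq]
    have hval : s i ≠ 2 := by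
      obtain ⟨hu, hs⟩ := (hch (i : ℕ)).2 ⟨((i : ℕ) - a) / 2, htm, hcond⟩
      simpa using hs
    have h3 : (s i : ℕ) = 0 ∨ (s i : ℕ) = 1 ∨ (s i : ℕ) = 2 := by omega
    have hne2 : (s i : ℕ) ≠ 2 := fun h => hval (Fin.ext h)
    rcases h3 with h3 | h3 | h3
    · rw [if_pos (Fin.ext h3)]
      apply Fin.ext
      simp [Fin.castLE, h3]
    · rw [if_neg (by intro h; rw [h] at h3; simp at h3)]
      apply Fin.ext
      simp [Fin.castLE, h3]
    · exact absurd h3 hne2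
  · -- s i is balanced
    by_contra hsi
    have hne : s i ≠ 2 := fun h => hsi (h ▸ rfl)
    obtain ⟨t, htm, hteq⟩ := (hch (i : ℕ)).1 ⟨i.isLt, by simpa using hne⟩
    apply hcond
    have ht0 : ((i : ℕ) - a) / 2 = t := by
      by_cases hE : E ≤ t <;> simp [pos', hE] at hteq <;> omega
    rw [ht0]
    exact hteq
end CL

end CountEvenAux

namespace CountEvenAux

lemma count1 (k : ℕ) (hk : 1 ≤ k) :
    Nat.card {s : Fin (2 * k) → Fin 3 //
        (Finset.univ.filter fun i => s i ≠ 2).card = k ∧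
        s ⟨0, by have := hk; omega⟩ ≠ 2 ∧ s ⟨2 * k - 1, by have := hk; omega⟩ ≠ 2 ∧
        (∀ i : Fin (2 * k), ∀ h : (i : ℕ) + 1 < 2 * k,
          s i ≠ 2 → s ⟨(i : ℕ) + 1, h⟩ = 2)}
      = (k - 1) * 2 ^ k := by
  classical
  have h1 : 0 + 2 * k ≤ 2 * k := by omega
  have h2 : 2 * k ≤ 0 + 2 * k + 1 := by omega
  rw [Nat.card_eq_fintype_card, Fintype.card_subtype]
  have himg : (Finset.univ.filter fun s : Fin (2 * k) → Fin 3 =>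
        (Finset.univ.filter fun i => s i ≠ 2).card = k ∧
        s ⟨0, by omega⟩ ≠ 2 ∧ s ⟨2 * k - 1, by omega⟩ ≠ 2 ∧
        (∀ i : Fin (2 * k), ∀ h : (i : ℕ) + 1 < 2 * k,
          s i ≠ 2 → s ⟨(i : ℕ) + 1, h⟩ = 2))
      = ((Finset.Ico 1 k) ×ˢ (Finset.univ : Finset (Fin k → Fin 2))).image
        (fun p => pat k 0 p.1 (fun n => if h : n < k then p.2 ⟨n, h⟩ else 0)) := by
    ext s
    simp only [Finset.mem_filter, Finset.mem_univ, true_and, Finset.mem_image,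
      Finset.mem_product, Finset.mem_Ico]
    constructor
    · rintro ⟨hcard, hs0, hsl, hadj⟩
      set U := (Finset.univ.filter fun i => s i ≠ 2).image Fin.val with hU
      have hUcard : U.card = k := by
        rw [hU, Finset.card_image_of_injective _ Fin.val_injective]
        exact hcard
      have hUmem : ∀ u, u ∈ U ↔ ∃ hu : u < 2 * k, s ⟨u, hu⟩ ≠ 2 := by
        intro u
        simp only [hU, Finset.mem_image, Finset.mem_filter, Finset.mem_univ, true_and]
        constructor
        · rintro ⟨i, hi, rfl⟩
          exact ⟨i.isLt, by simpa using hi⟩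
        · rintro ⟨hu, hs⟩
          exact ⟨⟨u, hu⟩, hs, rfl⟩
      have hadjU : ∀ u ∈ U, u + 1 ∉ U := by
        intro u hu hu1
        obtain ⟨h, hsne⟩ := (hUmem u).1 hu
        obtain ⟨h1', hs1⟩ := (hUmem (u + 1)).1 hu1
        exact hs1 (hadj ⟨u, h⟩ h1' hsne)
      obtain ⟨E, hEm, hch0⟩ := struct 0 k U
        (fun u hu => ⟨Nat.zero_le _, by obtain ⟨h, -⟩ := (hUmem u).1 hu; omega⟩)
        hUcard hadjU
      have hch : ∀ u : ℕ, (∃ hu : u < 2 * k, s ⟨u, hu⟩ ≠ 2) ↔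
          ∃ t < k, u = pos' 0 E t := fun u => (hUmem u).symm.trans (hch0 u)
      have hE1 : 1 ≤ E := by
        have h0U : (0 : ℕ) ∈ U := (hUmem 0).2 ⟨by omega, hs0⟩
        obtain ⟨t, ht, h0e⟩ := (hch0 0).1 h0U
        by_cases hEt : E ≤ t <;> simp [pos', hEt] at h0e <;> omega
      have hEk : E < k := by
        have hlU : (2 * k - 1 : ℕ) ∈ U := (hUmem (2 * k - 1)).2 ⟨by omega, hsl⟩
        obtain ⟨t, ht, hle⟩ := (hch0 (2 * k - 1)).1 hlU
        by_cases hEt : E ≤ t <;> simp [pos', hEt] at hle <;> omega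
      obtain ⟨σ, hσ⟩ := coverage h1 h2 hEm s hch
      exact ⟨(E, σ), ⟨⟨hE1, hEk⟩, trivial⟩, hσ.symm⟩
    · rintro ⟨⟨E, σ⟩, ⟨⟨hE1, hEk⟩, -⟩, rfl⟩
      have hEm : E ≤ k := le_of_lt hEk
      refine ⟨pat_card _ h1 h2 hEm, ?_, ?_, fun i h hne => pat_adj _ h1 h2 hEm i h hne⟩
      · rw [pat_ne_iff _ h1 h2 hEm]
        refine ⟨0, by omega, ?_⟩
        simp only [pos', Fin.val_mk]
        rw [if_neg (by omega)]
      · rw [pat_ne_iff _ h1 h2 hEm]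
        refine ⟨k - 1, by omega, ?_⟩
        simp only [pos', Fin.val_mk]
        rw [if_pos (by omega)]
        omega
  rw [himg, Finset.card_image_of_injOn, Finset.card_product]
  · simp [Nat.card_Ico]
  · rintro ⟨E, σ⟩ hp ⟨E', σ'⟩ hq heq
    simp only [Finset.mem_coe, Finset.mem_product, Finset.mem_Ico] at hp hq
    simp only at heq
    have hEm : E ≤ k := by omega
    have hEm' : E' ≤ k := by omega
    have hEE : E = E' := pat_inj_E _ h1 h2 hEm hEm' heq
    subst hEE
    have hσ := pat_inj_sigma _ h1 h2 hEm heq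
    have : σ = σ' := by
      funext t
      have := hσ t.1 t.2
      simpa [t.2] using this
    rw [this]

lemma count2 (k : ℕ) (hk : 1 ≤ k) :
    Nat.card {s : Fin (2 * k) → Fin 3 //
        (Finset.univ.filter fun i => s i ≠ 2).card = k - 1 ∧
        s ⟨0, by have := hk; omega⟩ = 2 ∧ s ⟨2 * k - 1, by have := hk; omega⟩ = 2 ∧
        (∀ i : Fin (2 * k), ∀ h : (i : ℕ) + 1 < 2 * k,
          s i ≠ 2 → s ⟨(i : ℕ) + 1, h⟩ = 2)}
      = k * 2 ^ (k - 1) := by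
  classical
  have h1 : 1 + 2 * (k - 1) ≤ 2 * k := by omega
  have h2 : 2 * k ≤ 1 + 2 * (k - 1) + 1 := by omega
  rw [Nat.card_eq_fintype_card, Fintype.card_subtype]
  have himg : (Finset.univ.filter fun s : Fin (2 * k) → Fin 3 =>
        (Finset.univ.filter fun i => s i ≠ 2).card = k - 1 ∧
        s ⟨0, by omega⟩ = 2 ∧ s ⟨2 * k - 1, by omega⟩ = 2 ∧
        (∀ i : Fin (2 * k), ∀ h : (i : ℕ) + 1 < 2 * k,
          s i ≠ 2 → s ⟨(i : ℕ) + 1, h⟩ = 2))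
      = ((Finset.Ico 0 k) ×ˢ (Finset.univ : Finset (Fin (k - 1) → Fin 2))).image
        (fun p => pat k 1 p.1 (fun n => if h : n < k - 1 then p.2 ⟨n, h⟩ else 0)) := by
    ext s
    simp only [Finset.mem_filter, Finset.mem_univ, true_and, Finset.mem_image,
      Finset.mem_product, Finset.mem_Ico]
    constructor
    · rintro ⟨hcard, hs0, hsl, hadj⟩
      set U := (Finset.univ.filter fun i => s i ≠ 2).image Fin.val with hU
      have hUcard : U.card = k - 1 := by
        rw [hU, Finset.card_image_of_injective _ Fin.val_injective]
        exact hcard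
      have hUmem : ∀ u, u ∈ U ↔ ∃ hu : u < 2 * k, s ⟨u, hu⟩ ≠ 2 := by
        intro u
        simp only [hU, Finset.mem_image, Finset.mem_filter, Finset.mem_univ, true_and]
        constructor
        · rintro ⟨i, hi, rfl⟩
          exact ⟨i.isLt, by simpa using hi⟩
        · rintro ⟨hu, hs⟩
          exact ⟨⟨u, hu⟩, hs, rfl⟩
      have hadjU : ∀ u ∈ U, u + 1 ∉ U := by
        intro u hu hu1
        obtain ⟨h, hsne⟩ := (hUmem u).1 hu
        obtain ⟨h1', hs1⟩ := (hUmem (u + 1)).1 hu1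
        exact hs1 (hadj ⟨u, h⟩ h1' hsne)
      obtain ⟨E, hEm, hch0⟩ := struct 1 (k - 1) U
        (fun u hu => by
          obtain ⟨h, hsne⟩ := (hUmem u).1 hu
          constructor
          · rcases Nat.eq_zero_or_pos u with rfl | h'
            · exact absurd hs0 hsne
            · exact h'
          · rcases (by omega : u = 2 * k - 1 ∨ u ≤ 1 + 2 * (k - 1) - 1) with rfl | h'
            · exact absurd hsl hsne
            · exact h')
        hUcard hadjU
      have hch : ∀ u : ℕ, (∃ hu : u < 2 * k, s ⟨u, hu⟩ ≠ 2) ↔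
          ∃ t < k - 1, u = pos' 1 E t := fun u => (hUmem u).symm.trans (hch0 u)
      obtain ⟨σ, hσ⟩ := coverage h1 h2 hEm s hch
      exact ⟨(E, σ), ⟨⟨Nat.zero_le _, by omega⟩, trivial⟩, hσ.symm⟩
    · rintro ⟨⟨E, σ⟩, ⟨⟨-, hEk⟩, -⟩, rfl⟩
      have hEm : E ≤ k - 1 := by omega
      refine ⟨pat_card _ h1 h2 hEm, ?_, ?_, fun i h hne => pat_adj _ h1 h2 hEm i h hne⟩
      · have hner : ¬ ((pat k 1 E fun n => if h : n < k - 1 then σ ⟨n, h⟩ else 0)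
            ⟨0, by omega⟩ ≠ 2) := by
          rw [pat_ne_iff _ h1 h2 hEm]
          rintro ⟨t, ht, hteq⟩
          simp only [Fin.val_mk] at hteq
          by_cases hEt : E ≤ t <;> simp [pos', hEt] at hteq <;> omega
        exact not_not.1 hner
      · have hner : ¬ ((pat k 1 E fun n => if h : n < k - 1 then σ ⟨n, h⟩ else 0)
            ⟨2 * k - 1, by omega⟩ ≠ 2) := by
          rw [pat_ne_iff _ h1 h2 hEm]
          rintro ⟨t, ht, hteq⟩
          simp only [Fin.val_mk] at hteq
          by_cases hEt : E ≤ t <;> simp [pos', hEt] at hteq <;> omega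
        exact not_not.1 hner
  rw [himg, Finset.card_image_of_injOn, Finset.card_product]
  · simp [Nat.card_Ico]
  · rintro ⟨E, σ⟩ hp ⟨E', σ'⟩ hq heq
    simp only [Finset.mem_coe, Finset.mem_product, Finset.mem_Ico] at hp hq
    simp only at heq
    have hEm : E ≤ k - 1 := by omega
    have hEm' : E' ≤ k - 1 := by omega
    have hEE : E = E' := pat_inj_E _ h1 h2 hEm hEm' heq
    subst hEE
    have hσ := pat_inj_sigma _ h1 h2 hEm heq
    have : σ = σ' := by
      funext t
      have := hσ t.1 t.2
      simpa [t.2] using this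
    rw [this]

end CountEvenAux

/-- Symbols: `0 = <`, `1 = >`, `2 = =`. A symbol is unbalanced iff it is not `2`. -/
theorem count_even_length_patterns (k : ℕ) (hk : 1 ≤ k) :
    Nat.card {s : Fin (2 * k) → Fin 3 //
        (Finset.univ.filter fun i => s i ≠ 2).card = k ∧
        s ⟨0, by omega⟩ ≠ 2 ∧ s ⟨2 * k - 1, by omega⟩ ≠ 2 ∧
        (∀ i : Fin (2 * k), ∀ h : (i : ℕ) + 1 < 2 * k,
          s i ≠ 2 → s ⟨(i : ℕ) + 1, h⟩ = 2)}
      = (k - 1) * 2 ^ k ∧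
    Nat.card {s : Fin (2 * k) → Fin 3 //
        (Finset.univ.filter fun i => s i ≠ 2).card = k - 1 ∧
        s ⟨0, by omega⟩ = 2 ∧ s ⟨2 * k - 1, by omega⟩ = 2 ∧
        (∀ i : Fin (2 * k), ∀ h : (i : ℕ) + 1 < 2 * k,
          s i ≠ 2 → s ⟨(i : ℕ) + 1, h⟩ = 2)}
      = k * 2 ^ (k - 1) ∧
    ((k : ℤ) - 1) * 2 ^ k - (k : ℤ) * 2 ^ (k - 1) = ((k : ℤ) - 2) * 2 ^ (k - 1) := by
  refine ⟨CountEvenAux.count1 k hk, CountEvenAux.count2 k hk, ?_⟩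
  obtain ⟨n, rfl⟩ := Nat.exists_eq_add_of_le hk
  have hn : 1 + n - 1 = n := by omega
  rw [hn]
  push_cast
  ring
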